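/- Let S be a set of index pairs containing all diagonal pairs (j,j), and suppose the graph on {1,...,d} with edges given by the off-diagonal pairs in S has connected components V_1,...,V_K. Let L(W) = Σ_{(j,k)∈S} λ_{jk}(W_{jk} - y_{jk})² with λ_{jk} > 0. If Σ* is the maximizer of log det(Σ) over the minimizers of L on the PSD cone (and a positive definite minimizer exists), then Σ* is block diagonal with respect to the partition V_1,...,V_K. -/

import Mathlib

open Matrix

lemma posDef_lower_bound {n : Type*} [Fintype n] [DecidableEq n] [Nonempty n]
    {A : Matrix n n ℝ} (hA : A.PosDef) :
    ∃ c > 0, ∀ x : n → ℝ, c * (x ⬝ᵥ x) ≤ x ⬝ᵥ A *ᵥ x := by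
  have hH := hA.isHermitian
  set μ := hH.eigenvalues with hμ
  set U : Matrix n n ℝ := (hH.eigenvectorUnitary : Matrix n n ℝ) with hU
  set c : ℝ := Finset.univ.inf' Finset.univ_nonempty μ with hc
  have hcpos : 0 < c := (Finset.lt_inf'_iff _).mpr fun i _ => hA.eigenvalues_pos i
  have hU1 : U * star U = 1 := mem_unitaryGroup_iff.mp hH.eigenvectorUnitary.2
  have hspec : A = U * diagonal μ * star U := by
    simpa using hH.spectral_theorem
  have hdiagsub : diagonal (fun i => μ i - c) = diagonal μ - c • (1 : Matrix n n ℝ) := by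
    ext a b
    by_cases h : a = b <;> simp [diagonal_apply, one_apply, h]
  have hsub : A - c • 1 = U * diagonal (fun i => μ i - c) * star U := by
    rw [hdiagsub, Matrix.mul_sub, Matrix.sub_mul, ← hspec]
    congr 1
    rw [Matrix.mul_smul, Matrix.smul_mul, mul_one, hU1]
  have hPSD : (A - c • 1).PosSemidef := by
    rw [hsub, Matrix.star_eq_conjTranspose U]
    exact (posSemidef_diagonal_iff.mpr fun i =>
      sub_nonneg.mpr (Finset.inf'_le _ (Finset.mem_univ i))).mul_mul_conjTranspose_same U
  refine ⟨c, hcpos, fun x => ?_⟩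
  have h0 := hPSD.dotProduct_mulVec_nonneg x
  simp only [star_trivial] at h0
  rw [Matrix.sub_mulVec, dotProduct_sub, Matrix.smul_mulVec, Matrix.one_mulVec,
    dotProduct_smul] at h0
  simp only [smul_eq_mul] at h0
  linarith

/-- quadratic coefficient extraction -/
lemma quadratic_coeff_zero (b e c : ℝ) (hc : 0 < c)
    (h : ∀ t : ℝ, |t| ≤ c → t * b + t ^ 2 * e ≤ 0) : b = 0 := by
  by_contra hb
  have hbpos : 0 < |b| := abs_pos.mpr hb
  set s : ℝ := min c (|b| / (|e| + 1)) with hs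
  have hepos : 0 < |e| + 1 := by positivity
  have hspos : 0 < s := lt_min hc (by positivity)
  have hsle : s ≤ c := min_le_left _ _
  have hsle2 : s * (|e| + 1) ≤ |b| := by
    rw [← le_div_iff₀ hepos]
    exact min_le_right _ _
  have h1 := h s (by rw [abs_of_pos hspos]; exact hsle)
  have h2 := h (-s) (by rw [abs_neg, abs_of_pos hspos]; exact hsle)
  have he1 : e ≤ |e| := le_abs_self e
  have he2 : -|e| ≤ e := neg_abs_le e
  have hb1 : b ≤ |b| := le_abs_self b
  have hb2 : -|b| ≤ b := neg_abs_le b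
  have key := mul_le_mul_of_nonneg_left hsle2 hspos.le
  rcases lt_or_gt_of_ne hb with hneg | hpos
  · rw [abs_of_neg hneg] at key
    nlinarith [mul_pos hspos hspos]
  · rw [abs_of_pos hpos] at key
    nlinarith [mul_pos hspos hspos]


/-- If the measurement set `S` (containing the diagonal) induces a graph whose connected
components are `V 1, …, V K`, then the maximum-entropy covariance reconstruction
(the determinant-maximal PSD minimizer of the reconstruction loss `L`, assuming a
positive definite minimizer exists) is block diagonal with respect to the components. -/
theorem max_entropy_reconstruction_block_diagonal {d K : ℕ}
    (S : Finset (Fin d × Fin d)) (hdiag : ∀ j, (j, j) ∈ S)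
    (lam y : Fin d × Fin d → ℝ) (hlam : ∀ p ∈ S, 0 < lam p)
    (L : Matrix (Fin d) (Fin d) ℝ → ℝ)
    (hL : ∀ W, L W = ∑ p ∈ S, lam p * (W p.1 p.2 - y p) ^ 2)
    (G : SimpleGraph (Fin d))
    (hG : ∀ j k, G.Adj j k ↔ (j ≠ k ∧ ((j, k) ∈ S ∨ (k, j) ∈ S)))
    (V : Fin K → Finset (Fin d))
    (hdisj : ∀ i i', i ≠ i' → Disjoint (V i) (V i'))
    (hcover : ∀ j, ∃ i, j ∈ V i)
    (hcomp : ∀ j k, (∃ i, j ∈ V i ∧ k ∈ V i) ↔ G.Reachable j k)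
    (Sig : Matrix (Fin d) (Fin d) ℝ)
    (hpsd : Sig.PosSemidef)
    (hminSig : ∀ W : Matrix (Fin d) (Fin d) ℝ, W.PosSemidef → L Sig ≤ L W)
    (hPD : ∃ W : Matrix (Fin d) (Fin d) ℝ, W.PosDef ∧
      ∀ W' : Matrix (Fin d) (Fin d) ℝ, W'.PosSemidef → L W ≤ L W')
    (hmax : ∀ W : Matrix (Fin d) (Fin d) ℝ, W.PosSemidef →
      (∀ W' : Matrix (Fin d) (Fin d) ℝ, W'.PosSemidef → L W ≤ L W') →
      W.det ≤ Sig.det) :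
    ∀ j k, (∀ i, ¬(j ∈ V i ∧ k ∈ V i)) → Sig j k = 0 := by
  have hsym : Sigᵀ = Sig := by
    have h := hpsd.1
    ext a b
    have := congrFun (congrFun h a) b
    simpa [conjTranspose_apply] using this
  have hsymE : ∀ a b, Sig a b = Sig b a := fun a b => congrFun (congrFun hsym b) a
  obtain ⟨W0, hW0, hW0min⟩ := hPD
  have hdet : 0 < Sig.det := lt_of_lt_of_le hW0.det_pos (hmax W0 hW0.posSemidef hW0min)
  have hPDSig : Sig.PosDef := by
    refine posDef_iff_dotProduct_mulVec.mpr ⟨hpsd.1, fun x hx => lt_of_le_of_ne (hpsd.dotProduct_mulVec_nonneg x) fun h => ?_⟩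
    have hz : Sig *ᵥ x = 0 := (hpsd.dotProduct_mulVec_zero_iff x).mp h.symm
    exact hdet.ne' (Matrix.exists_mulVec_eq_zero_iff.mp ⟨x, hx, hz⟩)
  -- Step 1: inverse entries vanish across components
  have hinv : ∀ j k, (∀ i, ¬(j ∈ V i ∧ k ∈ V i)) → Sig⁻¹ j k = 0 := by
    intro j k hjk
    have hne : j ≠ k := by
      obtain ⟨i, hi⟩ := hcover j
      rintro rfl
      exact hjk i ⟨hi, hi⟩
    have hreach : ¬ G.Reachable j k := fun h => by
      obtain ⟨i, hi⟩ := (hcomp j k).mpr h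
      exact hjk i hi
    have hnS1 : (j, k) ∉ S := fun hmem => hreach ((hG j k).mpr ⟨hne, Or.inl hmem⟩).reachable
    have hnS2 : (k, j) ∉ S := fun hmem => hreach ((hG j k).mpr ⟨hne, Or.inr hmem⟩).reachable
    set u : Fin d → ℝ := Pi.single j 1 with hu
    set v : Fin d → ℝ := Pi.single k 1 with hv
    set Hm : Matrix (Fin d) (Fin d) ℝ := Matrix.of fun a b => u a * v b + v a * u b with hHm
    have hHm0 : ∀ p ∈ S, Hm p.1 p.2 = 0 := by
      rintro ⟨a, b⟩ hp
      have ha1 : ¬(a = j ∧ b = k) := by rintro ⟨rfl, rfl⟩; exact hnS1 hp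
      have ha2 : ¬(a = k ∧ b = j) := by rintro ⟨rfl, rfl⟩; exact hnS2 hp
      show u a * v b + v a * u b = 0
      rcases eq_or_ne a j with rfl | h1
      · have hbk : b ≠ k := fun hb => ha1 ⟨rfl, hb⟩
        simp [hu, hv, Pi.single_apply, hbk, hne]
      · rcases eq_or_ne a k with rfl | h3
        · have hbj : b ≠ j := fun hb => ha2 ⟨rfl, hb⟩
          simp [hu, hv, Pi.single_apply, hbj, h1]
        · simp [hu, hv, Pi.single_apply, h1, h3]
    have hquadHm : ∀ x : Fin d → ℝ, x ⬝ᵥ Hm *ᵥ x = 2 * (x j * x k) := by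
      intro x
      have hmv : ∀ a, (Hm *ᵥ x) a = u a * x k + v a * x j := by
        intro a
        simp only [hHm, Matrix.mulVec, dotProduct, of_apply, add_mul, mul_assoc,
          Finset.sum_add_distrib, ← Finset.mul_sum]
        congr 1
        · congr 1
          simp [hv, Pi.single_apply]
        · congr 1
          simp [hu, Pi.single_apply]
      simp only [dotProduct, hmv, mul_add, Finset.sum_add_distrib]
      have e1 : ∑ a, x a * (u a * x k) = x j * x k := by
        simp [hu, Pi.single_apply, ite_mul, mul_ite]
      have e2 : ∑ a, x a * (v a * x j) = x k * x j := by
        simp [hv, Pi.single_apply, ite_mul, mul_ite]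
      rw [e1, e2]; ring
    have : Nonempty (Fin d) := ⟨j⟩
    obtain ⟨c, hcpos, hlow⟩ := posDef_lower_bound hPDSig
    have hdetle : ∀ t : ℝ, |t| ≤ c → (Sig + t • Hm).det ≤ Sig.det := by
      intro t ht
      have habs := abs_le.mp ht
      have hherm : (Sig + t • Hm).IsHermitian := by
        ext a b
        simp only [conjTranspose_apply, Matrix.add_apply, Matrix.smul_apply, star_trivial,
          hHm, of_apply, smul_eq_mul]
        rw [hsymE b a]
        ring
      have hps : (Sig + t • Hm).PosSemidef := by
        refine posSemidef_iff_dotProduct_mulVec.mpr ⟨hherm, fun x => ?_⟩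
        simp only [star_trivial]
        rw [Matrix.add_mulVec, dotProduct_add, Matrix.smul_mulVec, dotProduct_smul,
          hquadHm x, smul_eq_mul]
        have hlx := hlow x
        have hjk2 : x j * x j + x k * x k ≤ x ⬝ᵥ x := by
          have hsub : ({j, k} : Finset (Fin d)).sum (fun a => x a * x a) ≤
              Finset.univ.sum (fun a => x a * x a) :=
            Finset.sum_le_sum_of_subset_of_nonneg (Finset.subset_univ _)
              (fun a _ _ => mul_self_nonneg _)
          rwa [Finset.sum_pair hne] at hsub
        nlinarith [mul_nonneg (sub_nonneg.mpr habs.2) (sq_nonneg (x j - x k)),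
          mul_nonneg (by linarith : (0:ℝ) ≤ c + t) (sq_nonneg (x j + x k)),
          mul_le_mul_of_nonneg_left hjk2 hcpos.le]
      have hLeq : L (Sig + t • Hm) = L Sig := by
        rw [hL, hL]
        refine Finset.sum_congr rfl fun p hp => ?_
        rw [Matrix.add_apply, Matrix.smul_apply, hHm0 p hp, smul_zero, add_zero]
      exact hmax _ hps fun W' hW' => hLeq ▸ hminSig W' hW'
    set b0 : ℝ := (Sig.updateCol j v).det + (Sig.updateCol k u).det with hb0
    set e0 : ℝ := ((Sig.updateCol j v).updateCol k u).det with he0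
    have hcommute : ∀ (A : Matrix (Fin d) (Fin d) ℝ) (f g : Fin d → ℝ),
        (A.updateCol j f).updateCol k g = (A.updateCol k g).updateCol j f := by
      intro A f g
      ext a b
      rcases eq_or_ne b k with rfl | h1
      · simp [Matrix.updateCol_apply, hne.symm]
      · rcases eq_or_ne b j with rfl | h2
        · simp [Matrix.updateCol_apply, h1]
        · simp [Matrix.updateCol_apply, h1, h2]
    have hexpand : ∀ t : ℝ, (Sig + t • Hm).det = Sig.det + t * b0 + t ^ 2 * e0 := by
      intro t
      have hrepr : Sig + t • Hm =
          (Sig.updateCol j ((fun a => Sig a j) + t • v)).updateCol k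
            ((fun a => Sig a k) + t • u) := by
        ext a b
        rcases eq_or_ne b k with rfl | h1
        · simp [Matrix.updateCol_apply, hHm, hu, hv, Pi.single_apply, hne, hne.symm]
        · rcases eq_or_ne b j with rfl | h2
          · simp [Matrix.updateCol_apply, hHm, hu, hv, Pi.single_apply, hne, h1]
          · simp [Matrix.updateCol_apply, hHm, hu, hv, Pi.single_apply, h1, h2]
      set M := Sig.updateCol j ((fun a => Sig a j) + t • v) with hM
      have colM : (fun a => Sig a k) = fun a => M a k := by
        funext a
        simp [hM, Matrix.updateCol_apply, hne.symm]
      have step1 : (Sig + t • Hm).det = M.det + t * (M.updateCol k u).det := by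
        rw [hrepr, colM, det_updateCol_add, det_updateCol_smul,
          Matrix.updateCol_eq_self]
      have step2 : M.det = Sig.det + t * (Sig.updateCol j v).det := by
        rw [hM, det_updateCol_add, det_updateCol_smul, Matrix.updateCol_eq_self]
      have colM2 : (fun a => Sig a j) = fun a => (Sig.updateCol k u) a j := by
        funext a
        simp [Matrix.updateCol_apply, hne]
      have step3 : (M.updateCol k u).det =
          (Sig.updateCol k u).det + t * e0 := by
        rw [hM, hcommute, colM2, det_updateCol_add, det_updateCol_smul,
          Matrix.updateCol_eq_self, he0, hcommute]
      rw [step1, step2, step3]; ring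
    have hadjsymm : Sig.adjugate k j = Sig.adjugate j k := by
      have h := Sig.adjugate_transpose
      rw [hsym] at h
      exact (congrFun (congrFun h k) j).symm
    have hb0eq : b0 = 2 * Sig.adjugate j k := by
      have h1 : (Sig.updateCol j v).det = Sig.adjugate k j := by
        calc (Sig.updateCol j v).det = ((Sig.updateCol j v)ᵀ).det := (det_transpose _).symm
          _ = (Sigᵀ.updateRow j v).det := by rw [Matrix.updateRow_transpose]
          _ = (Sig.updateRow j v).det := by rw [hsym]
          _ = Sig.adjugate k j := (adjugate_apply Sig k j).symm
      have h2 : (Sig.updateCol k u).det = Sig.adjugate j k := by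
        calc (Sig.updateCol k u).det = ((Sig.updateCol k u)ᵀ).det := (det_transpose _).symm
          _ = (Sigᵀ.updateRow k u).det := by rw [Matrix.updateRow_transpose]
          _ = (Sig.updateRow k u).det := by rw [hsym]
          _ = Sig.adjugate j k := (adjugate_apply Sig j k).symm
      rw [hb0, h1, h2, hadjsymm]; ring
    have hb00 : b0 = 0 := by
      apply quadratic_coeff_zero b0 e0 c hcpos
      intro t ht
      have h := hdetle t ht
      rw [hexpand t] at h
      linarith
    have hadj0 : Sig.adjugate j k = 0 := by
      rw [hb0eq] at hb00; linarith
    rw [Matrix.inv_def, Matrix.smul_apply, hadj0, smul_zero]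
  -- Step 2: deduce the same for Sig itself
  intro j k hjk
  obtain ⟨i0, hj0⟩ := hcover j
  have hk0 : k ∉ V i0 := fun h => hjk i0 ⟨hj0, h⟩
  set E : Matrix (Fin d) (Fin d) ℝ :=
    diagonal (fun a => if a ∈ V i0 then (1 : ℝ) else 0) with hE
  have hcross : ∀ a b : Fin d, a ∈ V i0 → b ∉ V i0 → ∀ i, ¬(a ∈ V i ∧ b ∈ V i) := by
    rintro a b ha hb i ⟨hai, hbi⟩
    rcases eq_or_ne i i0 with rfl | hne'
    · exact hb hbi
    · exact (Finset.disjoint_left.mp (hdisj i i0 hne') hai) ha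
  have hcomm : Sig⁻¹ * E = E * Sig⁻¹ := by
    ext a b
    rw [hE, Matrix.mul_diagonal, Matrix.diagonal_mul]
    by_cases ha : a ∈ V i0 <;> by_cases hb' : b ∈ V i0 <;> simp [ha, hb']
    · have h0 := hinv a b (hcross a b ha hb')
      first | exact h0 | exact h0.symm | simp [h0]
    · have h0 := hinv a b (fun i hi => hcross b a hb' ha i ⟨hi.2, hi.1⟩)
      first | exact h0 | exact h0.symm | simp [h0]
  have hdu : IsUnit Sig.det := isUnit_iff_ne_zero.mpr hdet.ne'
  have h1 : Sig * Sig⁻¹ = 1 := Matrix.mul_nonsing_inv Sig hdu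
  have h2 : Sig⁻¹ * Sig = 1 := Matrix.nonsing_inv_mul Sig hdu
  have hSE : Sig * E = E * Sig := by
    calc Sig * E = Sig * E * (Sig⁻¹ * Sig) := by rw [h2, mul_one]
      _ = Sig * (E * Sig⁻¹) * Sig := by simp only [mul_assoc]
      _ = Sig * (Sig⁻¹ * E) * Sig := by rw [hcomm]
      _ = (Sig * Sig⁻¹) * (E * Sig) := by simp only [mul_assoc]
      _ = E * Sig := by rw [h1, one_mul]
  have hent := congrFun (congrFun hSE j) k
  rw [hE, Matrix.mul_diagonal, Matrix.diagonal_mul] at hent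
  simp only [hj0, hk0, if_true, if_false, mul_zero, one_mul] at hent
  exact hent.symm
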